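/- arXiv:2004.12774 — 4 statements merged into one kernel-verified Lean document; each statement's English description precedes it below -/
import Mathlib

section
/- Let λ be a real number. If some derivation of the 3-dimensional Heisenberg Lie algebra h₃ has characteristic polynomial X·(X² − 2λX + (λ² + 1)), then λ = 0. -/
set_option linter.unusedTactic false
set_option linter.unnecessarySeqFocus false
set_option linter.unreachableTactic false

open Polynomial

/-- The 3-dimensional Heisenberg Lie algebra `h₃`: the real vector space `Fin 3 → ℝ`
with basis `e₁, e₂, e₃` and only nonzero bracket `⁅e₁, e₂⁆ = e₃`. -/
def H3 : Type := Fin 3 → ℝ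

noncomputable instance : AddCommGroup H3 := Pi.addCommGroup
noncomputable instance : Module ℝ H3 := Pi.module _ _ _
instance : FiniteDimensional ℝ H3 := inferInstanceAs (FiniteDimensional ℝ (Fin 3 → ℝ))

lemma H3.add_apply (x y : H3) (i : Fin 3) : (x + y) i = x i + y i := rfl
lemma H3.smul_apply (r : ℝ) (x : H3) (i : Fin 3) : (r • x) i = r * x i := rfl

noncomputable instance : LieRing H3 :=
  { (inferInstance : AddCommGroup H3) with
    bracket := fun x y => ![0, 0, x 0 * y 1 - x 1 * y 0]
    add_lie := by
      intro x y z
      show (![_,_,_] : Fin 3 → ℝ) = (![_,_,_] : Fin 3 → ℝ) + (![_,_,_] : Fin 3 → ℝ)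
      funext i
      fin_cases i <;> simp [H3.add_apply] <;> ring
    lie_add := by
      intro x y z
      show (![_,_,_] : Fin 3 → ℝ) = (![_,_,_] : Fin 3 → ℝ) + (![_,_,_] : Fin 3 → ℝ)
      funext i
      fin_cases i <;> simp [H3.add_apply] <;> ring
    lie_self := by
      intro x
      show (![_,_,_] : Fin 3 → ℝ) = 0
      funext i
      fin_cases i <;> simp <;> ring
    leibniz_lie := by
      intro x y z
      show (![_,_,_] : Fin 3 → ℝ) = (![_,_,_] : Fin 3 → ℝ) + (![_,_,_] : Fin 3 → ℝ)
      funext i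
      fin_cases i <;> simp [H3.add_apply] <;> ring }

noncomputable instance : LieAlgebra ℝ H3 :=
  { lie_smul := by
      intro r x y
      show (![_,_,_] : Fin 3 → ℝ) = r • (![_,_,_] : Fin 3 → ℝ)
      funext i
      fin_cases i <;> simp [H3.smul_apply] <;> ring }

/-- If some derivation of `h₃` has characteristic polynomial `X * (X² - 2λX + (λ² + 1))`,
then `λ = 0`. -/
theorem eq_zero_of_charpoly_derivation_heisenberg (lam : ℝ)
    (h : ∃ D : LieDerivation ℝ H3 H3,
      LinearMap.charpoly D.toLinearMap
        = X * (X ^ 2 - C (2 * lam) * X + C (lam ^ 2 + 1))) :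
    lam = 0 := by
  obtain ⟨D, h⟩ := h
  set f := D.toLinearMap with hf
  set b : Module.Basis (Fin 3) ℝ H3 := Pi.basisFun ℝ (Fin 3) with hb
  have hbv : ∀ i j : Fin 3, (b i : Fin 3 → ℝ) j = if i = j then 1 else 0 := by
    intro i j
    rw [hb]
    show (Pi.basisFun ℝ (Fin 3)) i j = _
    simp [Pi.basisFun_apply, Pi.single_apply, eq_comm]
  have hbr : (⁅(b 0 : H3), (b 1 : H3)⁆ : H3) = b 2 := by
    show (![_,_,_] : Fin 3 → ℝ) = _
    funext i
    fin_cases i <;> simp [hbv]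
  have hD2 : f (b 2) = ![0, 0, f (b 0) 0 + f (b 1) 1] := by
    rw [← hbr]
    have h1 : f ⁅(b 0 : H3), b 1⁆ = ⁅f (b 0), b 1⁆ + ⁅b 0, f (b 1)⁆ := by
      have := D.apply_lie_eq_add (b 0) (b 1)
      rw [add_comm] at this
      exact this
    rw [h1]
    show (![_,_,_] : Fin 3 → ℝ) + (![_,_,_] : Fin 3 → ℝ) = _
    funext i
    fin_cases i <;> rw [Pi.add_apply] <;> simp [hbv]
  set M := LinearMap.toMatrix b b f with hM
  have hMij : ∀ i j, M i j = f (b j) i := by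
    intro i j
    rw [hM, LinearMap.toMatrix_apply]
    rfl
  have h02 : M 0 2 = 0 := by rw [hMij, hD2]; rfl
  have h12 : M 1 2 = 0 := by rw [hMij, hD2]; rfl
  have h22 : M 2 2 = M 0 0 + M 1 1 := by
    rw [hMij 2 2, hD2, hMij 0 0, hMij 1 1]; rfl
  have hcp : f.charpoly = M.charpoly := (LinearMap.charpoly_toMatrix f b).symm
  have hdet : M.charpoly
      = (X - C (M 0 0)) * ((X - C (M 1 1)) * (X - C (M 0 0 + M 1 1)))
        - (-C (M 0 1)) * ((-C (M 1 0)) * (X - C (M 0 0 + M 1 1))) := by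
    rw [Matrix.charpoly, Matrix.det_fin_three]
    rw [Matrix.charmatrix_apply_eq, Matrix.charmatrix_apply_eq,
      Matrix.charmatrix_apply_eq]
    rw [Matrix.charmatrix_apply_ne _ _ _ (by decide),
      Matrix.charmatrix_apply_ne _ _ _ (by decide),
      Matrix.charmatrix_apply_ne _ _ _ (by decide),
      Matrix.charmatrix_apply_ne _ _ _ (by decide),
      Matrix.charmatrix_apply_ne _ _ _ (by decide),
      Matrix.charmatrix_apply_ne _ _ _ (by decide)]
    rw [h02, h12, h22]
    simp only [map_zero, neg_zero]
    ring
  have key := hdet.symm.trans (hcp.symm.trans h)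
  have e0 := congrArg (Polynomial.eval (0:ℝ)) key
  have e1 := congrArg (Polynomial.eval (1:ℝ)) key
  have e2 := congrArg (Polynomial.eval (-1:ℝ)) key
  simp only [eval_mul, eval_sub, eval_add, eval_pow, eval_X, eval_C, eval_neg] at e0 e1 e2
  nlinarith [e0, e1, e2, sq_nonneg lam, sq_nonneg (M 0 0 + M 1 1),
    sq_nonneg (M 0 0 + M 1 1 - lam), sq_nonneg (M 0 0 + M 1 1 + lam)]
end

section
/- Let λ be a real number. If some derivation of the 3-dimensional Heisenberg Lie algebra h₃ has characteristic polynomial X(X − 1)(X − λ), then λ = 1 or λ = −1. -/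
set_option linter.unusedTactic false
set_option linter.unnecessarySeqFocus false
set_option linter.unreachableTactic false

open Polynomial

lemma H3.bracket_def (x y : H3) : ⁅x, y⁆ = ![0, 0, x 0 * y 1 - x 1 * y 0] := rfl

noncomputable def b3 : Module.Basis (Fin 3) ℝ H3 := Pi.basisFun ℝ (Fin 3)

lemma b3_apply (j i : Fin 3) : (b3 j : Fin 3 → ℝ) i = if i = j then 1 else 0 := by
  show (Pi.basisFun ℝ (Fin 3) j : Fin 3 → ℝ) i = _
  rw [Pi.basisFun_apply, Pi.single_apply]

/-- If some derivation of `h₃` has characteristic polynomial `X * (X - 1) * (X - λ)`,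
then `λ = 1` or `λ = -1`. -/
theorem eq_one_or_neg_one_of_charpoly_derivation_heisenberg (lam : ℝ)
    (h : ∃ D : LieDerivation ℝ H3 H3,
      LinearMap.charpoly D.toLinearMap = X * (X - 1) * (X - C lam)) :
    lam = 1 ∨ lam = -1 := by
  obtain ⟨D, hD⟩ := h
  rw [← LinearMap.charpoly_toMatrix D.toLinearMap b3] at hD
  set M := LinearMap.toMatrix b3 b3 D.toLinearMap with hM
  have hMij : ∀ i j, M i j = (D (b3 j) : Fin 3 → ℝ) i := by
    intro i j
    rw [hM, LinearMap.toMatrix_apply]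
    exact Pi.basisFun_repr ℝ (Fin 3) ((D : H3 → H3) (b3 j)) i
  have hbr : (⁅b3 0, b3 1⁆ : H3) = b3 2 := by
    rw [H3.bracket_def]
    funext i
    fin_cases i <;> simp [b3_apply]
  have hDe3 : ∀ i : Fin 3,
      (D (b3 2) : Fin 3 → ℝ) i
        = (⁅b3 0, D (b3 1)⁆ : H3) i + (⁅D (b3 0), b3 1⁆ : H3) i := by
    intro i
    rw [← H3.add_apply, ← D.apply_lie_eq_add, hbr]
  have h02 : M 0 2 = 0 := by
    rw [hMij, hDe3, H3.bracket_def, H3.bracket_def]; simp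
  have h12 : M 1 2 = 0 := by
    rw [hMij, hDe3, H3.bracket_def, H3.bracket_def]; simp
  have h22 : M 2 2 = M 0 0 + M 1 1 := by
    rw [hMij, hMij, hMij, hDe3, H3.bracket_def, H3.bracket_def]
    simp [b3_apply]
    ring
  -- expand charpoly
  have hdet : (Matrix.charmatrix M).det = X * (X - 1) * (X - C lam) := hD
  rw [Matrix.det_fin_three] at hdet
  simp only [Matrix.charmatrix_apply, Matrix.diagonal_apply, h02, h12, h22,
    show (0:Fin 3) ≠ 1 by decide, show (0:Fin 3) ≠ 2 by decide,
    show (1:Fin 3) ≠ 0 by decide, show (1:Fin 3) ≠ 2 by decide,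
    show (2:Fin 3) ≠ 0 by decide, show (2:Fin 3) ≠ 1 by decide,
    if_true, if_false, ite_true, ite_false, reduceIte, map_zero, map_add] at hdet
  set a := M 0 0; set bb := M 1 0; set c := M 0 1; set d := M 1 1
  have E0 := congrArg (eval 0) hdet
  have E1 := congrArg (eval 1) hdet
  have E2 := congrArg (eval (-1)) hdet
  simp only [eval_mul, eval_add, eval_sub, eval_neg, eval_X, eval_C, eval_one, eval_zero] at E0 E1 E2
  have eq0 : (a*d - bb*c) * (a+d) = 0 := by linear_combination -E0
  have eqA : 2*(a+d) = 1 + lam := by linear_combination (-(1:ℝ)/2) * E1 + (-(1:ℝ)/2) * E2 + E0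
  have eqB : (a+d)^2 + (a*d - bb*c) = lam := by linear_combination ((1:ℝ)/2) * E1 + (-(1:ℝ)/2) * E2
  rcases mul_eq_zero.mp eq0 with hp | hs
  · left
    have h1 : (a + d - 1)^2 = 0 := by linear_combination eqB - eqA - hp
    have h2 : a + d - 1 = 0 := by
      exact pow_eq_zero_iff (n := 2) (by norm_num) |>.mp h1
    linarith
  · right
    linarith
end

section
/- For every derivation D of the filiform Lie algebra n₄, the multiplicity of 0 as a root of the characteristic polynomial of D is either 0, 1, or 4; in particular, no derivation of n₄ has 0 as an eigenvalue with algebraic multiplicity exactly 2 or exactly 3. -/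
set_option linter.unusedTactic false
set_option linter.unnecessarySeqFocus false
set_option linter.unreachableTactic false

open Polynomial

/-- The 4-dimensional filiform Lie algebra `n₄`: the real vector space `Fin 4 → ℝ` with
basis `e₁, e₂, e₃, e₄` and only nonzero brackets `⁅e₁, e₂⁆ = e₃` and `⁅e₁, e₃⁆ = e₄`. -/
def N4 : Type := Fin 4 → ℝ

noncomputable instance : AddCommGroup N4 := Pi.addCommGroup
noncomputable instance : Module ℝ N4 := Pi.module _ _ _
instance : FiniteDimensional ℝ N4 := inferInstanceAs (FiniteDimensional ℝ (Fin 4 → ℝ))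

lemma N4.add_apply (x y : N4) (i : Fin 4) : (x + y) i = x i + y i := rfl
lemma N4.smul_apply (r : ℝ) (x : N4) (i : Fin 4) : (r • x) i = r * x i := rfl

noncomputable instance : LieRing N4 :=
  { (inferInstance : AddCommGroup N4) with
    bracket := fun x y => ![0, 0, x 0 * y 1 - x 1 * y 0, x 0 * y 2 - x 2 * y 0]
    add_lie := by
      intro x y z
      show (![_,_,_,_] : Fin 4 → ℝ) = (![_,_,_,_] : Fin 4 → ℝ) + (![_,_,_,_] : Fin 4 → ℝ)
      funext i
      fin_cases i <;> simp [N4.add_apply] <;> ring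
    lie_add := by
      intro x y z
      show (![_,_,_,_] : Fin 4 → ℝ) = (![_,_,_,_] : Fin 4 → ℝ) + (![_,_,_,_] : Fin 4 → ℝ)
      funext i
      fin_cases i <;> simp [N4.add_apply] <;> ring
    lie_self := by
      intro x
      show (![_,_,_,_] : Fin 4 → ℝ) = 0
      funext i
      fin_cases i <;> simp <;> ring
    leibniz_lie := by
      intro x y z
      show (![_,_,_,_] : Fin 4 → ℝ) = (![_,_,_,_] : Fin 4 → ℝ) + (![_,_,_,_] : Fin 4 → ℝ)
      funext i
      fin_cases i <;> simp [N4.add_apply] <;> ring }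

noncomputable instance : LieAlgebra ℝ N4 :=
  { lie_smul := by
      intro r x y
      show (![_,_,_,_] : Fin 4 → ℝ) = r • (![_,_,_,_] : Fin 4 → ℝ)
      funext i
      fin_cases i <;> simp [N4.smul_apply] <;> ring }

lemma N4.lie_apply (x y : N4) (i : Fin 4) :
    ⁅x, y⁆ i = ![0, 0, x 0 * y 1 - x 1 * y 0, x 0 * y 2 - x 2 * y 0] i := rfl

lemma N4.zero_apply (i : Fin 4) : (0 : N4) i = 0 := rfl

lemma n4_aux (a b c d e f g h : ℝ) :
    ((!![a,0,0,0; c,b,0,0; d,e,a+b,0; f,g,h,2*a+b] : Matrix (Fin 4) (Fin 4) ℝ).charpoly).rootMultiplicity 0 = 0 ∨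
    ((!![a,0,0,0; c,b,0,0; d,e,a+b,0; f,g,h,2*a+b] : Matrix (Fin 4) (Fin 4) ℝ).charpoly).rootMultiplicity 0 = 1 ∨
    ((!![a,0,0,0; c,b,0,0; d,e,a+b,0; f,g,h,2*a+b] : Matrix (Fin 4) (Fin 4) ℝ).charpoly).rootMultiplicity 0 = 4 := by
  set M : Matrix (Fin 4) (Fin 4) ℝ := !![a,0,0,0; c,b,0,0; d,e,a+b,0; f,g,h,2*a+b] with hM
  have hT : M.BlockTriangular OrderDual.toDual := by
    intro i j hij
    fin_cases i <;> fin_cases j <;> first | rfl | exact absurd hij (by decide) | simp [hM]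
  have hchar : M.charpoly = (X - C a) * (X - C b) * (X - C (a+b)) * (X - C (2*a+b)) := by
    rw [Matrix.charpoly, Matrix.det_of_lowerTriangular _ hT.charmatrix, Fin.prod_univ_four]
    simp [Matrix.charmatrix_apply_eq, hM]
  rw [hchar]
  have h1 : (X - C a : ℝ[X]) ≠ 0 := X_sub_C_ne_zero a
  have h2 : (X - C b : ℝ[X]) ≠ 0 := X_sub_C_ne_zero b
  have h3 : (X - C (a+b) : ℝ[X]) ≠ 0 := X_sub_C_ne_zero _
  have h4 : (X - C (2*a+b) : ℝ[X]) ≠ 0 := X_sub_C_ne_zero _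
  rw [rootMultiplicity_mul (mul_ne_zero (mul_ne_zero (mul_ne_zero h1 h2) h3) h4),
      rootMultiplicity_mul (mul_ne_zero (mul_ne_zero h1 h2) h3),
      rootMultiplicity_mul (mul_ne_zero h1 h2),
      rootMultiplicity_X_sub_C, rootMultiplicity_X_sub_C,
      rootMultiplicity_X_sub_C, rootMultiplicity_X_sub_C]
  rcases eq_or_ne a 0 with rfl | ha
  · rcases eq_or_ne b 0 with rfl | hb
    · right; right; norm_num
    · right; left
      rw [if_pos rfl, if_neg (by simpa [eq_comm] using hb),
          if_neg (by simpa [eq_comm] using hb), if_neg (by simpa [eq_comm] using hb)]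
  · rcases eq_or_ne b 0 with rfl | hb
    · right; left
      rw [if_neg (Ne.symm ha), if_pos rfl,
          if_neg (by simpa [eq_comm] using ha),
          if_neg (by intro hh; exact ha (by linarith))]
    · rcases eq_or_ne (a + b) 0 with hab | hab
      · right; left
        rw [if_neg (Ne.symm ha), if_neg (Ne.symm hb), if_pos hab.symm,
            if_neg (by intro hh; exact ha (by linarith))]
      · rcases eq_or_ne (2*a + b) 0 with hab2 | hab2
        · right; left
          rw [if_neg (Ne.symm ha), if_neg (Ne.symm hb), if_neg (Ne.symm hab), if_pos hab2.symm]
        · left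
          rw [if_neg (Ne.symm ha), if_neg (Ne.symm hb), if_neg (Ne.symm hab), if_neg (Ne.symm hab2)]

/-- For every derivation `D` of the filiform Lie algebra `n₄`, the multiplicity of `0` as a
root of the characteristic polynomial of `D` is `0`, `1` or `4`; in particular no derivation
of `n₄` has `0` as an eigenvalue with algebraic multiplicity exactly `2` or exactly `3`. -/
theorem rootMultiplicity_zero_charpoly_derivation_n4 (D : LieDerivation ℝ N4 N4) :
    (LinearMap.charpoly D.toLinearMap).rootMultiplicity 0 = 0 ∨
    (LinearMap.charpoly D.toLinearMap).rootMultiplicity 0 = 1 ∨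
    (LinearMap.charpoly D.toLinearMap).rootMultiplicity 0 = 4 := by
  classical
  set bb : Module.Basis (Fin 4) ℝ N4 := Pi.basisFun ℝ (Fin 4) with hbb
  set M : Matrix (Fin 4) (Fin 4) ℝ := LinearMap.toMatrix bb bb D.toLinearMap with hMdef
  set E : Fin 4 → N4 := fun j => (Pi.single j 1 : Fin 4 → ℝ) with hE
  have hMA : ∀ i j : Fin 4, M i j = (D (E j) : N4) i := fun i j => rfl
  have e12 : ⁅E 0, E 1⁆ = E 2 := by
    funext i
    rw [N4.lie_apply]
    fin_cases i <;> simp [hE, Pi.single_apply]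
  have e13 : ⁅E 0, E 2⁆ = E 3 := by
    funext i
    rw [N4.lie_apply]
    fin_cases i <;> simp [hE, Pi.single_apply]
  have e23 : ⁅E 1, E 2⁆ = (0 : N4) := by
    funext i
    rw [N4.lie_apply, N4.zero_apply]
    fin_cases i <;> simp [hE, Pi.single_apply]
  have hD2 : D (E 2) = ⁅E 0, D (E 1)⁆ + ⁅D (E 0), E 1⁆ := by
    rw [← e12]; exact D.apply_lie_eq_add _ _
  have hD3 : D (E 3) = ⁅E 0, D (E 2)⁆ + ⁅D (E 0), E 2⁆ := by
    rw [← e13]; exact D.apply_lie_eq_add _ _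
  have hD0 : (0 : N4) = ⁅E 1, D (E 2)⁆ + ⁅D (E 1), E 2⁆ := by
    rw [← D.apply_lie_eq_add, e23, map_zero]
  have comp2 : ∀ i : Fin 4, (D (E 2) : N4) i =
      (⁅E 0, D (E 1)⁆ + ⁅D (E 0), E 1⁆ : N4) i := fun i => congrFun hD2 i
  have comp3 : ∀ i : Fin 4, (D (E 3) : N4) i =
      (⁅E 0, D (E 2)⁆ + ⁅D (E 0), E 2⁆ : N4) i := fun i => congrFun hD3 i
  have comp0 : ∀ i : Fin 4, (0 : N4) i =
      (⁅E 1, D (E 2)⁆ + ⁅D (E 1), E 2⁆ : N4) i := fun i => congrFun hD0 i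
  have c02 : M 0 2 = 0 := by
    have h := comp2 0
    rw [N4.add_apply, N4.lie_apply, N4.lie_apply] at h
    simp only [hMA]
    simp [hE, Pi.single_apply] at h ⊢
    linarith
  have c12 : M 1 2 = 0 := by
    have h := comp2 1
    rw [N4.add_apply, N4.lie_apply, N4.lie_apply] at h
    simp only [hMA]
    simp [hE, Pi.single_apply] at h ⊢
    linarith
  have c22 : M 2 2 = M 0 0 + M 1 1 := by
    have h := comp2 2
    rw [N4.add_apply, N4.lie_apply, N4.lie_apply] at h
    simp only [hMA]
    simp [hE, Pi.single_apply] at h ⊢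
    linarith
  have c32 : M 3 2 = M 2 1 := by
    have h := comp2 3
    rw [N4.add_apply, N4.lie_apply, N4.lie_apply] at h
    simp only [hMA]
    simp [hE, Pi.single_apply] at h ⊢
    linarith
  have c03 : M 0 3 = 0 := by
    have h := comp3 0
    rw [N4.add_apply, N4.lie_apply, N4.lie_apply] at h
    simp only [hMA]
    simp [hE, Pi.single_apply] at h ⊢
    linarith
  have c13 : M 1 3 = 0 := by
    have h := comp3 1
    rw [N4.add_apply, N4.lie_apply, N4.lie_apply] at h
    simp only [hMA]
    simp [hE, Pi.single_apply] at h ⊢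
    linarith
  have c23 : M 2 3 = 0 := by
    have h := comp3 2
    have h12 := c12
    rw [N4.add_apply, N4.lie_apply, N4.lie_apply] at h
    simp only [hMA] at h12 ⊢
    simp [hE, Pi.single_apply] at h h12 ⊢
    linarith
  have c33 : M 3 3 = 2 * M 0 0 + M 1 1 := by
    have h := comp3 3
    have h22 := c22
    rw [N4.add_apply, N4.lie_apply, N4.lie_apply] at h
    simp only [hMA] at h22 ⊢
    simp [hE, Pi.single_apply] at h h22 ⊢
    linarith
  have c01 : M 0 1 = 0 := by
    have h := comp0 3
    rw [N4.add_apply, N4.lie_apply, N4.lie_apply, N4.zero_apply] at h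
    simp only [hMA]
    simp [hE, Pi.single_apply] at h ⊢
    linarith
  have hM4 : M = !![M 0 0, 0, 0, 0;
                    M 1 0, M 1 1, 0, 0;
                    M 2 0, M 2 1, M 0 0 + M 1 1, 0;
                    M 3 0, M 3 1, M 2 1, 2 * M 0 0 + M 1 1] := by
    ext i j
    fin_cases i <;> fin_cases j <;>
      simp [c01, c02, c12, c22, c32, c03, c13, c23, c33]
  rw [← LinearMap.charpoly_toMatrix D.toLinearMap bb, ← hMdef, hM4]
  exact n4_aux (M 0 0) (M 1 1) (M 1 0) (M 2 0) (M 2 1) (M 3 0) (M 3 1) (M 2 1)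
end

section
/- Let λ be a real number. If some derivation of the filiform Lie algebra n₄ has characteristic polynomial X(X − 1)(X − λ)(X − (1 − λ)), then λ ∈ {−1, 1/2, 2}. -/
set_option linter.unusedTactic false
set_option linter.unnecessarySeqFocus false
set_option linter.unreachableTactic false

open Polynomial

noncomputable def N4.E (j : Fin 4) : N4 := Pi.single j 1
lemma N4.bracket_zero (x y : N4) : ⁅x, y⁆ (0 : Fin 4) = 0 := rfl
lemma N4.bracket_one (x y : N4) : ⁅x, y⁆ (1 : Fin 4) = 0 := rfl
lemma N4.bracket_two (x y : N4) : ⁅x, y⁆ (2 : Fin 4) = x 0 * y 1 - x 1 * y 0 := rfl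
lemma N4.bracket_three (x y : N4) : ⁅x, y⁆ (3 : Fin 4) = x 0 * y 2 - x 2 * y 0 := rfl
lemma N4.ext' (x y : N4) (h0 : x 0 = y 0) (h1 : x 1 = y 1) (h2 : x 2 = y 2)
    (h3 : x 3 = y 3) : x = y := by
  funext i; fin_cases i
  exacts [h0, h1, h2, h3]
lemma N4.E_apply (j i : Fin 4) : N4.E j i = if i = j then 1 else 0 := Pi.single_apply j 1 i

noncomputable def N4.equivFun : N4 ≃ₗ[ℝ] (Fin 4 → ℝ) where
  toFun x := x
  invFun x := x
  map_add' _ _ := rfl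
  map_smul' _ _ := rfl
  left_inv _ := rfl
  right_inv _ := rfl

noncomputable def N4.basis : Module.Basis (Fin 4) ℝ N4 := Module.Basis.ofEquivFun N4.equivFun

lemma N4.basis_repr (x : N4) (i : Fin 4) : N4.basis.repr x i = x i :=
  Module.Basis.ofEquivFun_repr_apply N4.equivFun x i

lemma N4.basis_apply (j : Fin 4) : N4.basis j = N4.E j := by
  rw [N4.basis, Module.Basis.coe_ofEquivFun]
  rfl

lemma N4.br01 : ⁅N4.E 0, N4.E 1⁆ = N4.E 2 := by
  apply N4.ext' <;> simp [N4.bracket_zero, N4.bracket_one, N4.bracket_two, N4.bracket_three,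
    N4.E_apply, N4.zero_apply]
lemma N4.br02 : ⁅N4.E 0, N4.E 2⁆ = N4.E 3 := by
  apply N4.ext' <;> simp [N4.bracket_zero, N4.bracket_one, N4.bracket_two, N4.bracket_three,
    N4.E_apply, N4.zero_apply]
lemma N4.br12 : ⁅N4.E 1, N4.E 2⁆ = 0 := by
  apply N4.ext' <;> simp [N4.bracket_zero, N4.bracket_one, N4.bracket_two, N4.bracket_three,
    N4.E_apply, N4.zero_apply]

theorem det4 (m : Matrix (Fin 4) (Fin 4) ℝ[X]) :
    m.det = m 0 0 * (m 1 1 * (m 2 2 * m 3 3 - m 2 3 * m 3 2) - m 1 2 * (m 2 1 * m 3 3 - m 2 3 * m 3 1) + m 1 3 * (m 2 1 * m 3 2 - m 2 2 * m 3 1))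
      - m 0 1 * (m 1 0 * (m 2 2 * m 3 3 - m 2 3 * m 3 2) - m 1 2 * (m 2 0 * m 3 3 - m 2 3 * m 3 0) + m 1 3 * (m 2 0 * m 3 2 - m 2 2 * m 3 0))
      + m 0 2 * (m 1 0 * (m 2 1 * m 3 3 - m 2 3 * m 3 1) - m 1 1 * (m 2 0 * m 3 3 - m 2 3 * m 3 0) + m 1 3 * (m 2 0 * m 3 1 - m 2 1 * m 3 0))
      - m 0 3 * (m 1 0 * (m 2 1 * m 3 2 - m 2 2 * m 3 1) - m 1 1 * (m 2 0 * m 3 2 - m 2 2 * m 3 0) + m 1 2 * (m 2 0 * m 3 1 - m 2 1 * m 3 0)) := by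
  rw [Matrix.det_succ_row_zero]
  simp [Fin.sum_univ_succ, Matrix.det_fin_three, Matrix.submatrix_apply,
    Fin.succAbove]
  ring

set_option maxHeartbeats 1000000 in
theorem charpoly_tri (a p q b c d r : ℝ) :
    (!![a,0,0,0; b,p,0,0; c,q,a+p,0; d,r,q,2*a+p] : Matrix (Fin 4) (Fin 4) ℝ).charpoly
      = (X - C a) * (X - C p) * (X - C (a+p)) * (X - C (2*a+p)) := by
  rw [Matrix.charpoly, det4]
  simp [Matrix.charmatrix_apply, Matrix.diagonal_apply]
  ring

set_option maxHeartbeats 1600000 in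
/-- If some derivation of the filiform Lie algebra `n₄` has characteristic polynomial
`X * (X - 1) * (X - λ) * (X - (1 - λ))`, then `λ ∈ {-1, 1/2, 2}`. -/
theorem charpoly_derivation_n4_d4_lambda (lam : ℝ)
    (h : ∃ D : LieDerivation ℝ N4 N4,
      LinearMap.charpoly D.toLinearMap
        = X * (X - 1) * (X - C lam) * (X - C (1 - lam))) :
    lam = -1 ∨ lam = 1 / 2 ∨ lam = 2 := by
  obtain ⟨D, hD⟩ := h
  -- Leibniz consequences
  have k2 : D (N4.E 2) = ⁅N4.E 0, D (N4.E 1)⁆ + ⁅D (N4.E 0), N4.E 1⁆ := by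
    rw [← N4.br01]; exact D.apply_lie_eq_add _ _
  have k3 : D (N4.E 3) = ⁅N4.E 0, D (N4.E 2)⁆ + ⁅D (N4.E 0), N4.E 2⁆ := by
    rw [← N4.br02]; exact D.apply_lie_eq_add _ _
  have k0 : (0 : N4) = ⁅N4.E 1, D (N4.E 2)⁆ + ⁅D (N4.E 1), N4.E 2⁆ := by
    have := D.apply_lie_eq_add (N4.E 1) (N4.E 2)
    rwa [N4.br12, map_zero] at this
  set a := D (N4.E 0) 0 with ha_def
  set b := D (N4.E 0) 1 with hb_def
  set c := D (N4.E 0) 2 with hc_def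
  set d := D (N4.E 0) 3 with hd_def
  set p := D (N4.E 1) 1 with hp_def
  set q := D (N4.E 1) 2 with hq_def
  set r := D (N4.E 1) 3 with hr_def
  -- scalar consequences
  have h10 : D (N4.E 1) 0 = 0 := by
    have := congrArg (fun v : N4 => v 3) k0
    simpa [N4.zero_apply, N4.add_apply, N4.bracket_three, N4.E_apply] using this.symm
  have h20 : D (N4.E 2) 0 = 0 := by
    have := congrArg (fun v : N4 => v 0) k2
    simpa [N4.zero_apply, N4.add_apply, N4.bracket_zero, N4.E_apply] using this
  have h21 : D (N4.E 2) 1 = 0 := by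
    have := congrArg (fun v : N4 => v 1) k2
    simpa [N4.add_apply, N4.bracket_one, N4.E_apply] using this
  have h22 : D (N4.E 2) 2 = a + p := by
    have := congrArg (fun v : N4 => v 2) k2
    simp [N4.add_apply, N4.bracket_two, N4.E_apply] at this
    rw [this]; ring
  have h23 : D (N4.E 2) 3 = q := by
    have := congrArg (fun v : N4 => v 3) k2
    simp [N4.add_apply, N4.bracket_three, N4.E_apply] at this
    rw [this, hq_def]
  have h30 : D (N4.E 3) 0 = 0 := by
    have := congrArg (fun v : N4 => v 0) k3
    simpa [N4.add_apply, N4.bracket_zero, N4.E_apply] using this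
  have h31 : D (N4.E 3) 1 = 0 := by
    have := congrArg (fun v : N4 => v 1) k3
    simpa [N4.add_apply, N4.bracket_one, N4.E_apply] using this
  have h32 : D (N4.E 3) 2 = 0 := by
    have := congrArg (fun v : N4 => v 2) k3
    simp [N4.add_apply, N4.bracket_two, N4.E_apply] at this
    exact this.trans h21
  have h33 : D (N4.E 3) 3 = 2*a + p := by
    have := congrArg (fun v : N4 => v 3) k3
    simp [N4.add_apply, N4.bracket_three, N4.E_apply] at this
    rw [this, h22]; ring
  -- matrix of D
  have hM : LinearMap.toMatrix N4.basis N4.basis D.toLinearMap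
      = !![a,0,0,0; b,p,0,0; c,q,a+p,0; d,r,q,2*a+p] := by
    ext i j
    rw [LinearMap.toMatrix_apply, N4.basis_repr, N4.basis_apply]
    fin_cases i <;> fin_cases j <;>
      simp only [LieDerivation.coeFn_coe, Matrix.cons_val', Matrix.cons_val_zero,
        Matrix.cons_val_one, Matrix.head_cons, Matrix.empty_val', Matrix.cons_val_fin_one,
        Matrix.head_fin_const, Matrix.cons_val_succ] <;>
      first
        | rfl
        | exact h10 | exact h20 | exact h21 | exact h22 | exact h23
        | exact h30 | exact h31 | exact h32 | exact h33
  have hcp : LinearMap.charpoly D.toLinearMap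
      = (X - C a) * (X - C p) * (X - C (a+p)) * (X - C (2*a+p)) := by
    have hchar := LinearMap.charpoly_toMatrix D.toLinearMap N4.basis
    rw [hM, charpoly_tri] at hchar
    exact hchar.symm
  have key : ∀ t : ℝ, (t-a)*(t-p)*(t-(a+p))*(t-(2*a+p)) = t*(t-1)*(t-lam)*(t-(1-lam)) := by
    intro t
    have := congrArg (Polynomial.eval t) (hcp.symm.trans hD)
    simpa using this
  have e0 := key 0
  have e1 := key 1
  have em1 := key (-1)
  have e2 := key 2
  have hA : 4*a + 3*p = 2 := by
    linear_combination (-1/6)*e2 + (-1/2)*e0 + (1/2)*e1 + (1/6)*em1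
  have hB : 5*a^2 + 9*a*p + 3*p^2 = 1 + lam - lam^2 := by
    linear_combination (1/2)*e1 + (1/2)*em1 - e0
  have hC : a*p*(3*a+2*p) + (a+p)^2*(2*a+p) = lam - lam^2 := by
    linear_combination (1/2)*e0 + (-1)*e1 + (1/3)*em1 + (1/6)*e2
  have hprod : a * p * (a+p) * (2*a+p) = 0 := by linear_combination e0
  rcases mul_eq_zero.mp hprod with h' | h4
  · rcases mul_eq_zero.mp h' with h'' | h3
    · rcases mul_eq_zero.mp h'' with h1a | h2p
      · -- a = 0 : contradiction
        exfalso
        have hp2 : p = 2/3 := by rw [h1a] at hA; linarith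
        rw [h1a, hp2] at hB hC
        norm_num at hB hC
        linarith
      · -- p = 0 : lam = 1/2
        have ha2 : a = 1/2 := by rw [h2p] at hA; linarith
        rw [h2p, ha2] at hB
        norm_num at hB
        have : (lam - 1/2)^2 = 0 := by nlinarith [hB]
        have := pow_eq_zero_iff (n := 2) (by norm_num) |>.mp this
        right; left; linarith [sub_eq_zero.mp this]
    · -- a + p = 0 : contradiction
      exfalso
      have ha2 : a = 2 := by linarith
      have hp2 : p = -2 := by linarith
      rw [ha2, hp2] at hB hC
      norm_num at hB hC
      linarith
  · -- 2a + p = 0 : lam = -1 or 2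
    have ha2 : a = -1 := by linarith
    have hp2 : p = 2 := by linarith
    rw [ha2, hp2] at hB
    norm_num at hB
    have : (lam - 2) * (lam + 1) = 0 := by nlinarith [hB]
    rcases mul_eq_zero.mp this with h | h
    · right; right; linarith [sub_eq_zero.mp h]
    · left; linarith
end
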